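/- arXiv:2209.00811 — 3 statements merged into one kernel-verified Lean document; each statement's English description precedes it below -/
import Mathlib

section
/- (Case i<0, j>0.) Assume t_{−i,−a} = t_{ia} for all i ∈ I_{r|r} and a ∈ I_{n|n}, and assume relation (II) holds for all 1 ≤ i,j ≤ r and a,b ∈ I_{n|n}. Then relation (I) holds for all i,j ∈ I_{r|r} with i < 0 < j and all a,b ∈ I_{n|n}. -/
open scoped BigOperators

set_option synthInstance.maxHeartbeats 400000
set_option maxHeartbeats 1000000

noncomputable section

/-- The base field `K = ℂ(q)`. -/
abbrev K : Type := RatFunc ℂ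

/-- The indeterminate `q ∈ ℂ(q)`. -/
noncomputable def q : K := RatFunc.X

/-- `ξ = q - q⁻¹`. -/
noncomputable def ξ : K := q - q⁻¹

/-- Parity: `p(i) = 0` if `i > 0`, and `p(i) = 1` if `i < 0`. -/
def p (i : ℤ) : ℕ := if 0 < i then 0 else 1

/-- `φ(i,j) = (-1)^{p(j)} (δ_{i,j} + δ_{i,-j})`. -/
def φ (i j : ℤ) : ℤ :=
  (if 0 < j then 1 else -1) * ((if i = j then 1 else 0) + (if i = -j then 1 else 0))

/-- Indicator of a (decidable) proposition, as an element of `K`. -/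
def ind (P : Prop) [Decidable P] : K := if P then 1 else 0

/-- Membership in the index set `I_{m|m} = {-m, …, -1, 1, …, m} ⊆ ℤ`. -/
def Idx (m : ℕ) (i : ℤ) : Prop := i ≠ 0 ∧ |i| ≤ (m : ℤ)

section Relations

variable {A : Type*} [Ring A] [Algebra K A]

/-- Relation (I), for indices `i, j ∈ I_{r|r}` and `a, b ∈ I_{n|n}`:
`(-1)^{p(i)p(j)+p(j)p(b)+p(b)p(i)} ( q^{φ(i,j)} t_{ia} t_{jb}
  − (-1)^{(p(i)+p(a))(p(j)+p(b))} q^{φ(a,b)} t_{jb} t_{ia} )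
 = ξ (δ_{a<b} − δ_{j<i}) t_{ja} t_{ib}
   + (-1)^{p(j)+p(b)} ξ (δ_{−a<b} − δ_{j<−i}) t_{j,−a} t_{i,−b}`. -/
def RelI (t : ℤ → ℤ → A) (i j a b : ℤ) : Prop :=
  ((-1 : K) ^ (p i * p j + p j * p b + p b * p i)) •
      ((q ^ φ i j) • (t i a * t j b)
        - (((-1 : K) ^ ((p i + p a) * (p j + p b))) * q ^ φ a b) • (t j b * t i a))
  = (ξ * (ind (a < b) - ind (j < i))) • (t j a * t i b)
    + (((-1 : K) ^ (p j + p b)) * ξ * (ind (-a < b) - ind (j < -i))) •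
        (t j (-a) * t i (-b))

/-- Relation (II), for indices `1 ≤ i, j ≤ r` and `a, b ∈ I_{n|n}`:
`q^{δ_{ij}} t_{ia} t_{jb} − (-1)^{p(a)p(b)} q^{φ(a,b)} t_{jb} t_{ia}
 = ξ (δ_{a<b} − δ_{j<i}) t_{ja} t_{ib} + (-1)^{p(b)} ξ δ_{−a<b} t_{j,−a} t_{i,−b}`. -/
def RelII (t : ℤ → ℤ → A) (i j a b : ℤ) : Prop :=
  (q ^ (if i = j then 1 else 0 : ℕ)) • (t i a * t j b)
      - (((-1 : K) ^ (p a * p b)) * q ^ φ a b) • (t j b * t i a)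
  = (ξ * (ind (a < b) - ind (j < i))) • (t j a * t i b)
    + (((-1 : K) ^ p b) * ξ * ind (-a < b)) • (t j (-a) * t i (-b))

end Relations

private lemma helper_scale {A : Type*} [Ring A] [Algebra K A]
    (e : K) {c1 c2 c3 c4 d1 d2 d3 d4 : K} {X1 X2 Y Z : A}
    (H : c1 • X1 - c2 • X2 = c3 • Y + c4 • Z)
    (h1 : d1 = e * c1) (h2 : d2 = e * c2) (h3 : d3 = e * c3) (h4 : d4 = e * c4) :
    d1 • X1 - d2 • X2 = d4 • Z + d3 • Y := by
  subst h1 h2 h3 h4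
  rw [mul_smul, mul_smul, mul_smul, mul_smul, ← smul_sub, H, smul_add, add_comm]

/-- (Case `i < 0 < j`.) Assume `t_{−i,−a} = t_{ia}` for all
`i ∈ I_{r|r}`, `a ∈ I_{n|n}`, and assume relation (II) holds for all
`1 ≤ i, j ≤ r` and `a, b ∈ I_{n|n}`. Then relation (I) holds for all
`i, j ∈ I_{r|r}` with `i < 0 < j` and all `a, b ∈ I_{n|n}`. -/
theorem relII_implies_relI_neg_pos (r n : ℕ) (hr : 0 < r) (hn : 0 < n)
    (A : Type*) [Ring A] [Algebra K A] (t : ℤ → ℤ → A)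
    (hsym : ∀ i a, Idx r i → Idx n a → t (-i) (-a) = t i a)
    (hII : ∀ i j a b, 1 ≤ i → i ≤ (r : ℤ) → 1 ≤ j → j ≤ (r : ℤ) →
      Idx n a → Idx n b → RelII t i j a b) :
    ∀ i j a b, Idx r i → Idx r j → i < 0 → 0 < j →
      Idx n a → Idx n b → RelI t i j a b := by
  intro i j a b hi hj hineg hjpos ha hb
  obtain ⟨ha0, han⟩ := ha
  obtain ⟨hb0, hbn⟩ := hb
  have hir : -i ≤ (r : ℤ) := by have := hi.2; rw [abs_of_neg hineg] at this; omega
  have hjr : j ≤ (r : ℤ) := by have := hj.2; rw [abs_of_pos hjpos] at this; omega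
  have ha' : Idx n (-a) := ⟨by omega, by rw [abs_neg]; exact han⟩
  have hb' : Idx n (-b) := ⟨by omega, by rw [abs_neg]; exact hbn⟩
  have H := hII (-i) j (-a) b (by omega) hir (by omega) hjr ha' ⟨hb0, hbn⟩
  unfold RelII at H
  unfold RelI
  have e1 : t i a = t (-i) (-a) := (hsym i a hi ⟨ha0, han⟩).symm
  have e2 : t i b = t (-i) (-b) := (hsym i b hi ⟨hb0, hbn⟩).symm
  have e4 : t i (-b) = t (-i) b := by
    have h := hsym i (-b) hi hb'
    rw [neg_neg] at h
    exact h.symm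
  rw [e1, e2, e4]
  have hpi : p i = 1 := by unfold p; rw [if_neg (by omega)]
  have hpj : p j = 0 := by unfold p; rw [if_pos hjpos]
  have hindji : ind (j < i) = 0 := by unfold ind; rw [if_neg (by omega)]
  have hφij : φ i j = if -i = j then (1 : ℤ) else 0 := by
    unfold φ; split_ifs <;> omega
  have hφab : φ (-a) b = φ a b := by
    unfold φ
    have h1 : (-a = b) ↔ (a = -b) := by omega
    have h2 : (-a = -b) ↔ (a = b) := by omega
    simp only [h1, h2]
    ring
  simp only [neg_neg, hφab] at H
  rw [hpi, hpj, hindji, hφij]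
  rcases ha0.lt_or_gt with haneg | hapos <;> rcases hb0.lt_or_gt with hbneg | hbpos
  · have hpa : p a = 1 := by unfold p; rw [if_neg (by omega)]
    have hpb : p b = 1 := by unfold p; rw [if_neg (by omega)]
    have hpa' : p (-a) = 0 := by unfold p; rw [if_pos (by omega)]
    rw [hpa, hpb]
    rw [hpa', hpb] at H
    by_cases hij : -i = j
    · rw [if_pos hij] at H ⊢
      rw [zpow_one, smul_sub, smul_smul, smul_smul]
      rw [pow_one] at H
      exact helper_scale (-1) H (by ring) (by ring) (by ring) (by ring)
    · rw [if_neg hij] at H ⊢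
      rw [zpow_zero, smul_sub, smul_smul, smul_smul]
      rw [pow_zero] at H
      exact helper_scale (-1) H (by ring) (by ring) (by ring) (by ring)
  · have hpa : p a = 1 := by unfold p; rw [if_neg (by omega)]
    have hpb : p b = 0 := by unfold p; rw [if_pos (by omega)]
    have hpa' : p (-a) = 0 := by unfold p; rw [if_pos (by omega)]
    rw [hpa, hpb]
    rw [hpa', hpb] at H
    by_cases hij : -i = j
    · rw [if_pos hij] at H ⊢
      rw [zpow_one, smul_sub, smul_smul, smul_smul]
      rw [pow_one] at H
      exact helper_scale 1 H (by ring) (by ring) (by ring) (by ring)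
    · rw [if_neg hij] at H ⊢
      rw [zpow_zero, smul_sub, smul_smul, smul_smul]
      rw [pow_zero] at H
      exact helper_scale 1 H (by ring) (by ring) (by ring) (by ring)
  · have hpa : p a = 0 := by unfold p; rw [if_pos (by omega)]
    have hpb : p b = 1 := by unfold p; rw [if_neg (by omega)]
    have hpa' : p (-a) = 1 := by unfold p; rw [if_neg (by omega)]
    rw [hpa, hpb]
    rw [hpa', hpb] at H
    by_cases hij : -i = j
    · rw [if_pos hij] at H ⊢
      rw [zpow_one, smul_sub, smul_smul, smul_smul]
      rw [pow_one] at H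
      exact helper_scale (-1) H (by ring) (by ring) (by ring) (by ring)
    · rw [if_neg hij] at H ⊢
      rw [zpow_zero, smul_sub, smul_smul, smul_smul]
      rw [pow_zero] at H
      exact helper_scale (-1) H (by ring) (by ring) (by ring) (by ring)
  · have hpa : p a = 0 := by unfold p; rw [if_pos (by omega)]
    have hpb : p b = 0 := by unfold p; rw [if_pos (by omega)]
    have hpa' : p (-a) = 1 := by unfold p; rw [if_neg (by omega)]
    rw [hpa, hpb]
    rw [hpa', hpb] at H
    by_cases hij : -i = j
    · rw [if_pos hij] at H ⊢
      rw [zpow_one, smul_sub, smul_smul, smul_smul]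
      rw [pow_one] at H
      exact helper_scale 1 H (by ring) (by ring) (by ring) (by ring)
    · rw [if_neg hij] at H ⊢
      rw [zpow_zero, smul_sub, smul_smul, smul_smul]
      rw [pow_zero] at H
      exact helper_scale 1 H (by ring) (by ring) (by ring) (by ring)

end
end

section
/- (Case i>0, j<0.) Assume t_{−i,−a} = t_{ia} for all i ∈ I_{r|r} and a ∈ I_{n|n}, and assume relation (II) holds for all 1 ≤ i,j ≤ r and a,b ∈ I_{n|n}. Then relation (I) holds for all i,j ∈ I_{r|r} with j < 0 < i and all a,b ∈ I_{n|n}. -/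
open scoped BigOperators

set_option synthInstance.maxHeartbeats 400000
set_option maxHeartbeats 1000000

noncomputable section

/-- Auxiliary shortcut instances so that the `module`/`match_scalars` machinery can
relate `ℕ`-, `ℤ`- and `K`-scalar multiplications (works around the nonstandard
`SMul`/`Algebra` instances on `RatFunc`). -/
noncomputable instance (priority := 10000) : SMul ℕ K := NSMul.toSMul
noncomputable instance (priority := 10000) : SMul ℤ K := ZSMul.toSMul
noncomputable instance (priority := 10000) : Algebra ℕ K := Semiring.toNatAlgebra
noncomputable instance (priority := 10000) : Algebra ℤ K := Ring.toIntAlgebra K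

set_option maxHeartbeats 4000000 in
/-- (Case `j < 0 < i`.) Assume `t_{−i,−a} = t_{ia}` for all
`i ∈ I_{r|r}`, `a ∈ I_{n|n}`, and assume relation (II) holds for all
`1 ≤ i, j ≤ r` and `a, b ∈ I_{n|n}`. Then relation (I) holds for all
`i, j ∈ I_{r|r}` with `j < 0 < i` and all `a, b ∈ I_{n|n}`. -/
theorem relII_implies_relI_pos_neg (r n : ℕ) (hr : 0 < r) (hn : 0 < n)
    (A : Type*) [Ring A] [Algebra K A] (t : ℤ → ℤ → A)
    (hsym : ∀ i a, Idx r i → Idx n a → t (-i) (-a) = t i a)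
    (hII : ∀ i j a b, 1 ≤ i → i ≤ (r : ℤ) → 1 ≤ j → j ≤ (r : ℤ) →
      Idx n a → Idx n b → RelII t i j a b) :
    ∀ i j a b, Idx r i → Idx r j → j < 0 → 0 < i →
      Idx n a → Idx n b → RelI t i j a b := by

  intro i j a b hi hj hjneg hipos ha hb
  obtain ⟨hi0, hir⟩ := hi
  obtain ⟨hj0, hjr⟩ := hj
  obtain ⟨ha0, han⟩ := ha
  obtain ⟨hb0, hbn⟩ := hb
  rw [abs_le] at hir hjr han hbn
  obtain ⟨j', rfl⟩ : ∃ j'', j = -j'' := ⟨-j, by ring⟩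
  have hIr : Idx r j' := ⟨by omega, by rw [abs_le]; omega⟩
  have hNa : Idx n (-a) := ⟨by omega, by rw [abs_le]; omega⟩
  have hNb : Idx n (-b) := ⟨by omega, by rw [abs_le]; omega⟩
  have hNa' : Idx n a := ⟨by omega, by rw [abs_le]; omega⟩
  have hNb' : Idx n b := ⟨by omega, by rw [abs_le]; omega⟩
  have e1 : t (-j') b = t j' (-b) := by
    have h := hsym j' (-b) hIr hNb; rwa [neg_neg] at h
  have e2 : t (-j') a = t j' (-a) := by
    have h := hsym j' (-a) hIr hNa; rwa [neg_neg] at h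
  have e3 : t (-j') (-a) = t j' a := hsym j' a hIr hNa'
  have h1 : RelII t i j' a (-b) := hII i j' a (-b) (by omega) (by omega) (by omega) (by omega) hNa' hNb
  unfold RelI
  unfold RelII at h1
  rw [e1, e2, e3]
  simp only [neg_neg] at h1 ⊢
  unfold p φ ind ξ at h1 ⊢
  simp only [neg_neg, hipos, (show ¬((0:ℤ) < -j') from by omega),
    (show ((-j':ℤ) < i) from by omega),
    (show ¬(i = -j') from by omega),
    (show ((-j' : ℤ) < -i) ↔ (i < j') from by omega),
    if_true, if_false] at h1 ⊢
  rcases eq_or_ne a b with heq | hba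
  · subst heq
    simp only [neg_neg, lt_self_iff_false, eq_self_iff_true, if_true, if_false,
      (show ¬a = -a from by omega),
      (show ((0:ℤ) < -a) ↔ ¬(0:ℤ) < a from by omega),
      (show ((-a:ℤ) < a) ↔ (0:ℤ) < a from by omega),
      (show ((a:ℤ) < -a) ↔ ¬(0:ℤ) < a from by omega)] at h1 ⊢
    rcases eq_or_ne i j' with heq2 | hij
    · subst heq2
      simp only [eq_self_iff_true, lt_self_iff_false, if_true, if_false] at h1 ⊢
      (try split_ifs at h1 ⊢) <;> (try norm_num at h1 ⊢) <;>
        first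
        | omega
        | linear_combination (norm := module) h1
        | linear_combination (norm := module) (-1 : K) • h1
    · simp only [hij, (show (j' < i) ↔ ¬(i < j') from by omega), if_false] at h1 ⊢
      (try split_ifs at h1 ⊢) <;> (try norm_num at h1 ⊢) <;>
        first
        | omega
        | linear_combination (norm := module) h1
        | linear_combination (norm := module) (-1 : K) • h1
  · rcases eq_or_ne a (-b) with heq | hba2
    · subst heq
      simp only [neg_neg, lt_self_iff_false, eq_self_iff_true, if_true, if_false,
        (show ¬(-b : ℤ) = b from by omega),
        (show ¬(b : ℤ) = -b from by omega),
        (show ((0:ℤ) < -b) ↔ ¬(0:ℤ) < b from by omega),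
        (show ((-b:ℤ) < b) ↔ (0:ℤ) < b from by omega),
        (show ((b:ℤ) < -b) ↔ ¬(0:ℤ) < b from by omega)] at h1 ⊢
      rcases eq_or_ne i j' with heq2 | hij
      · subst heq2
        simp only [eq_self_iff_true, lt_self_iff_false, if_true, if_false] at h1 ⊢
        (try split_ifs at h1 ⊢) <;> (try norm_num at h1 ⊢) <;>
          first
          | omega
          | linear_combination (norm := module) h1
          | linear_combination (norm := module) (-1 : K) • h1
      · simp only [hij, (show (j' < i) ↔ ¬(i < j') from by omega), if_false] at h1 ⊢
        (try split_ifs at h1 ⊢) <;> (try norm_num at h1 ⊢) <;>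
          first
          | omega
          | linear_combination (norm := module) h1
          | linear_combination (norm := module) (-1 : K) • h1
    · simp only [neg_neg,
        (show ¬a = b from by omega),
        (show ¬a = -b from by omega),
        (show ((0:ℤ) < -b) ↔ ¬(0:ℤ) < b from by omega),
        (show ((-a:ℤ) < -b) ↔ ¬(a < b) from by omega),
        (show ((a:ℤ) < -b) ↔ ¬(-a < b) from by omega),
        if_false] at h1 ⊢
      rcases eq_or_ne i j' with heq2 | hij
      · subst heq2
        simp only [eq_self_iff_true, lt_self_iff_false, if_true, if_false] at h1 ⊢
        (try split_ifs at h1 ⊢) <;> (try norm_num at h1 ⊢) <;>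
          first
          | omega
          | linear_combination (norm := module) h1
          | linear_combination (norm := module) (-1 : K) • h1
      · simp only [hij, (show (j' < i) ↔ ¬(i < j') from by omega), if_false] at h1 ⊢
        (try split_ifs at h1 ⊢) <;> (try norm_num at h1 ⊢) <;>
          first
          | omega
          | linear_combination (norm := module) h1
          | linear_combination (norm := module) (-1 : K) • h1


end
end

section
/- (Case i<0, j<0.) Assume t_{−i,−a} = t_{ia} for all i ∈ I_{r|r} and a ∈ I_{n|n}, and assume relation (II) holds for all 1 ≤ i,j ≤ r and a,b ∈ I_{n|n}. Then relation (I) holds for all i,j ∈ I_{r|r} with i < 0 and j < 0 and all a,b ∈ I_{n|n}. -/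
open scoped BigOperators

set_option synthInstance.maxHeartbeats 400000
set_option maxHeartbeats 1000000

noncomputable section

set_option maxHeartbeats 4000000 in
theorem aux_relII_implies_relI_neg_neg {F : Type*} [Field F] {A : Type*} [Ring A]
    [Algebra F A] (q' : F) (hq' : q' ≠ 0) (r n : ℕ) (t : ℤ → ℤ → A)
    (hsym : ∀ i a, Idx r i → Idx n a → t (-i) (-a) = t i a)
    (hII : ∀ i j a b : ℤ, 1 ≤ i → i ≤ (r : ℤ) → 1 ≤ j → j ≤ (r : ℤ) →
      Idx n a → Idx n b →
      (q' ^ (if i = j then 1 else 0 : ℕ)) • (t i a * t j b)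
          - (((-1 : F) ^ (p a * p b)) * q' ^ φ a b) • (t j b * t i a)
      = ((q' - q'⁻¹) * ((if a < b then (1:F) else 0) - (if j < i then (1:F) else 0))) •
            (t j a * t i b)
        + (((-1 : F) ^ p b) * (q' - q'⁻¹) * (if -a < b then (1:F) else 0)) •
            (t j (-a) * t i (-b))) :
    ∀ i j a b : ℤ, Idx r i → Idx r j → i < 0 → j < 0 → Idx n a → Idx n b →
      ((-1 : F) ^ (p i * p j + p j * p b + p b * p i)) •
          ((q' ^ φ i j) • (t i a * t j b)
            - (((-1 : F) ^ ((p i + p a) * (p j + p b))) * q' ^ φ a b) • (t j b * t i a))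
      = ((q' - q'⁻¹) * ((if a < b then (1:F) else 0) - (if j < i then (1:F) else 0))) •
            (t j a * t i b)
        + (((-1 : F) ^ (p j + p b)) * (q' - q'⁻¹) *
            ((if -a < b then (1:F) else 0) - (if j < -i then (1:F) else 0))) •
            (t j (-a) * t i (-b)) := by
  intro i j a b hi hj hineg hjneg ha hb
  obtain ⟨hi0, hir⟩ := hi
  obtain ⟨hj0, hjr⟩ := hj
  obtain ⟨ha0, han⟩ := ha
  obtain ⟨hb0, hbn⟩ := hb
  rw [abs_le] at hir hjr han hbn
  have h := hII (-i) (-j) (-a) (-b) (by omega) (by omega) (by omega) (by omega)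
    ⟨by omega, by rw [abs_le]; omega⟩ ⟨by omega, by rw [abs_le]; omega⟩
  have e1 : t (-i) (-a) = t i a :=
    hsym i a ⟨hi0, by rw [abs_le]; omega⟩ ⟨ha0, by rw [abs_le]; omega⟩
  have e2 : t (-j) (-b) = t j b :=
    hsym j b ⟨hj0, by rw [abs_le]; omega⟩ ⟨hb0, by rw [abs_le]; omega⟩
  have e3 : t (-j) (-a) = t j a :=
    hsym j a ⟨hj0, by rw [abs_le]; omega⟩ ⟨ha0, by rw [abs_le]; omega⟩
  have e4 : t (-i) (-b) = t i b :=
    hsym i b ⟨hi0, by rw [abs_le]; omega⟩ ⟨hb0, by rw [abs_le]; omega⟩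
  have e5 : t (-j) a = t j (-a) := by
    have := hsym j (-a) ⟨hj0, by rw [abs_le]; omega⟩ ⟨by omega, by rw [abs_le]; omega⟩
    rwa [neg_neg] at this
  have e6 : t (-i) b = t i (-b) := by
    have := hsym i (-b) ⟨hi0, by rw [abs_le]; omega⟩ ⟨by omega, by rw [abs_le]; omega⟩
    rwa [neg_neg] at this
  rw [e1, e2, e3, e4] at h
  simp only [neg_neg] at h
  rw [e5, e6] at h
  have key : ∀ x y u v : A, u = v → x - y = (-1 : F) • (u - v) → x = y := by
    intro x y u v huv hxy
    have h0 : x - y = 0 := by rw [hxy, huv, sub_self, smul_zero]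
    exact sub_eq_zero.mp h0
  rcases eq_or_ne b a with rfl | hba1
  · rcases eq_or_ne i j with rfl | hij
    · refine key _ _ _ _ h ?_
      match_scalars <;>
        (simp only [p, φ, neg_neg, neg_lt_neg_iff, neg_inj, lt_self_iff_false, if_false,
            eq_self_iff_true, if_true, CharZero.eq_neg_self_iff, CharZero.neg_eq_self_iff, neg_pos] <;> split_ifs <;>
          first | omega | ring1 | (field_simp; ring1) | (simp; done) | (simp; ring1) | (simp; field_simp; ring1))
    · refine key _ _ _ _ h ?_
      match_scalars <;>
        (simp only [p, φ, neg_neg, neg_lt_neg_iff, neg_inj, lt_self_iff_false, if_false,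
            eq_self_iff_true, if_true, CharZero.eq_neg_self_iff, CharZero.neg_eq_self_iff, neg_pos] <;> split_ifs <;>
          first | omega | ring1 | (field_simp; ring1) | (simp; done) | (simp; ring1) | (simp; field_simp; ring1))
  · rcases eq_or_ne b (-a) with rfl | hba2
    · simp only [neg_neg] at h ⊢
      rcases eq_or_ne i j with rfl | hij
      · refine key _ _ _ _ h ?_
        match_scalars <;>
          (simp only [p, φ, neg_neg, neg_lt_neg_iff, neg_inj, lt_self_iff_false, if_false,
            eq_self_iff_true, if_true, CharZero.eq_neg_self_iff, CharZero.neg_eq_self_iff, neg_pos] <;> split_ifs <;>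
            first | omega | ring1 | (field_simp; ring1) | (simp; done) | (simp; ring1) | (simp; field_simp; ring1))
      · refine key _ _ _ _ h ?_
        match_scalars <;>
          (simp only [p, φ, neg_neg, neg_lt_neg_iff, neg_inj, lt_self_iff_false, if_false,
            eq_self_iff_true, if_true, CharZero.eq_neg_self_iff, CharZero.neg_eq_self_iff, neg_pos] <;> split_ifs <;>
            first | omega | ring1 | (field_simp; ring1) | (simp; done) | (simp; ring1) | (simp; field_simp; ring1))
    · rcases eq_or_ne i j with rfl | hij
      · refine key _ _ _ _ h ?_
        match_scalars <;>
          (simp only [p, φ, neg_neg, neg_lt_neg_iff, neg_inj, lt_self_iff_false, if_false,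
            eq_self_iff_true, if_true, CharZero.eq_neg_self_iff, CharZero.neg_eq_self_iff, neg_pos] <;> split_ifs <;>
            first | omega | ring1 | (field_simp; ring1) | (simp; done) | (simp; ring1) | (simp; field_simp; ring1))
      · refine key _ _ _ _ h ?_
        match_scalars <;>
          (simp only [p, φ, neg_neg, neg_lt_neg_iff, neg_inj, lt_self_iff_false, if_false,
            eq_self_iff_true, if_true, CharZero.eq_neg_self_iff, CharZero.neg_eq_self_iff, neg_pos] <;> split_ifs <;>
            first | omega | ring1 | (field_simp; ring1) | (simp; done) | (simp; ring1) | (simp; field_simp; ring1))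

/-- (Case `i < 0`, `j < 0`.) Assume `t_{−i,−a} = t_{ia}` for
all `i ∈ I_{r|r}`, `a ∈ I_{n|n}`, and assume relation (II) holds for all
`1 ≤ i, j ≤ r` and `a, b ∈ I_{n|n}`. Then relation (I) holds for all
`i, j ∈ I_{r|r}` with `i < 0` and `j < 0` and all `a, b ∈ I_{n|n}`. -/
theorem relII_implies_relI_neg_neg (r n : ℕ) (hr : 0 < r) (hn : 0 < n)
    (A : Type*) [Ring A] [Algebra K A] (t : ℤ → ℤ → A)
    (hsym : ∀ i a, Idx r i → Idx n a → t (-i) (-a) = t i a)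
    (hII : ∀ i j a b, 1 ≤ i → i ≤ (r : ℤ) → 1 ≤ j → j ≤ (r : ℤ) →
      Idx n a → Idx n b → RelII t i j a b) :
    ∀ i j a b, Idx r i → Idx r j → i < 0 → j < 0 →
      Idx n a → Idx n b → RelI t i j a b := by
  have hq : q ≠ 0 := RatFunc.X_ne_zero
  intro i j a b hi hj hineg hjneg ha hb
  have hII' := fun (i j a b : ℤ) h1 h2 h3 h4 h5 h6 => hII i j a b h1 h2 h3 h4 h5 h6
  simp only [RelII, ξ, ind] at hII'
  have := aux_relII_implies_relI_neg_neg q hq r n t hsym hII' i j a b hi hj hineg hjneg ha hb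
  simpa only [RelI, ξ, ind] using this

end
end
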